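/- Let H : B² → ℂ² be a map in the class M₋, with Taylor expansion at the origin H(z) = (-z₁ + Σ_{|α|≥2} q¹_α z^α, -z₂ + Σ_{|α|≥2} q²_α z^α). Then |q¹_{0,2}| ≤ 3√3/2, where q¹_{0,2} = (1/2)·∂²H₁/∂z₂²(0). -/

import Mathlib

open Complex

noncomputable section

/-- The open unit ball in `ℂ²`. -/
def B2 : Set (ℂ × ℂ) := {z | ‖z.1‖ ^ 2 + ‖z.2‖ ^ 2 < 1}

/-- The class `M₋` of holomorphic maps `H : B² → ℂ²` with `H(0) = 0`, `dH₀ = -id`,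
and `Re⟨H(z), z⟩ ≤ 0` on `B²`. -/
def MminusClass (H : ℂ × ℂ → ℂ × ℂ) : Prop :=
  DifferentiableOn ℂ H B2 ∧ H 0 = 0 ∧
  (∀ z : ℂ × ℂ, fderiv ℂ H 0 z = -z) ∧
  ∀ z ∈ B2, ((H z).1 * (starRingEnd ℂ) z.1 + (H z).2 * (starRingEnd ℂ) z.2).re ≤ 0

/-- The coefficient `q¹_{0,2} = (1/2)·∂²H₁/∂z₂²(0)`. -/
def shearCoef (H : ℂ × ℂ → ℂ × ℂ) : ℂ :=
  (1 / 2 : ℂ) * iteratedDeriv 2 (fun w : ℂ => (H (0, w)).1) 0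

open Metric Set Filter Topology


noncomputable section

/-- Maximum principle for the real part. -/
lemma re_le_zero_center {g : ℂ → ℂ} {r : ℝ} (hr : 0 < r)
    (hg : DiffContOnCl ℂ g (ball 0 r))
    (hb : ∀ ζ ∈ sphere (0:ℂ) r, (g ζ).re ≤ 0) : (g 0).re ≤ 0 := by
  have hexp : DiffContOnCl ℂ (fun z => Complex.exp (g z)) (ball 0 r) :=
    (differentiable_exp.diffContOnCl).comp hg (mapsTo_univ _ _)
  have h := Complex.norm_le_of_forall_mem_frontier_norm_le (isBounded_ball) hexp
    (C := 1) ?_ (z := 0) ?_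
  · rw [Complex.norm_exp] at h
    exact Real.exp_le_one_iff.mp h
  · intro z hz
    rw [frontier_ball _ hr.ne'] at hz
    rw [Complex.norm_exp]
    exact Real.exp_le_one_iff.mpr (hb z hz)
  · exact subset_closure (mem_ball_self hr)

/-- Second-order Schwarz-type bound. -/
lemma schwarz2 {f : ℂ → ℂ} {R M r : ℝ} (hf : DifferentiableOn ℂ f (ball 0 R))
    (h0 : f 0 = 0) (h1 : deriv f 0 = 0) (hM : ∀ x ∈ ball (0:ℂ) R, ‖f x‖ ≤ M)
    (hr : 0 < r) (hrR : r < R) : ∀ x : ℂ, ‖x‖ ≤ r → ‖f x‖ ≤ M / r ^ 2 * ‖x‖ ^ 2 := by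
  have hmem : (0:ℂ) ∈ ball (0:ℂ) R := mem_ball_self (hr.trans hrR)
  have hR : ball (0:ℂ) R ∈ nhds (0:ℂ) := ball_mem_nhds _ (hr.trans hrR)
  have hg1 : DifferentiableOn ℂ (dslope f 0) (ball 0 R) :=
    (Complex.differentiableOn_dslope hR).mpr hf
  have hg2 : DifferentiableOn ℂ (dslope (dslope f 0) 0) (ball 0 R) :=
    (Complex.differentiableOn_dslope hR).mpr hg1
  set g := dslope (dslope f 0) 0 with hgdef
  have hratio : ∀ x : ℂ, x ≠ 0 → g x = f x / x ^ 2 := by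
    intro x hx
    rw [hgdef, dslope_of_ne _ hx, slope_def_field, dslope_same, h1, sub_zero,
      dslope_of_ne _ hx, slope_def_field, h0, sub_zero]
    ring
  have hMnn : 0 ≤ M := le_trans (norm_nonneg _) (hM 0 hmem)
  -- max principle for ‖g‖ on closed ball r
  have hgb : ∀ x ∈ closedBall (0:ℂ) r, ‖g x‖ ≤ M / r ^ 2 := by
    intro x hx
    have hcl : DiffContOnCl ℂ g (ball 0 r) := DifferentiableOn.diffContOnCl <| by
      rw [closure_ball _ hr.ne']
      exact hg2.mono (fun y hy => mem_ball_zero_iff.mpr (lt_of_le_of_lt (mem_closedBall_zero_iff.mp hy) hrR))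
    have := Complex.norm_le_of_forall_mem_frontier_norm_le (isBounded_ball) hcl
      (C := M / r ^ 2) ?_ (z := x) ?_
    · exact this
    · intro z hz
      rw [frontier_ball _ hr.ne', mem_sphere_zero_iff_norm] at hz
      have hz0 : z ≠ 0 := by intro h; rw [h, norm_zero] at hz; exact hr.ne hz
      rw [hratio z hz0, norm_div, norm_pow, hz]
      exact div_le_div_of_nonneg_right (hM z (by rw [mem_ball_zero_iff, hz]; exact hrR)) (by positivity)
    · rwa [closure_ball _ hr.ne']
  intro x hx
  rcases eq_or_ne x 0 with rfl | hx0
  · simp [h0]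
  · have hxn : (0:ℝ) < ‖x‖ := norm_pos_iff.mpr hx0
    have := hgb x (mem_closedBall_zero_iff.mpr hx)
    rw [hratio x hx0, norm_div, norm_pow, div_le_iff₀ (by positivity)] at this
    calc ‖f x‖ ≤ M / r ^ 2 * ‖x‖ ^ 2 := this
    _ = M / r ^ 2 * ‖x‖ ^ 2 := rfl

/-- Cauchy-type estimate for the derivative at the center. -/
lemma deriv_center_bound {f : ℂ → ℂ} {R M r : ℝ} (hf : DifferentiableOn ℂ f (ball 0 R))
    (hM : ∀ x ∈ ball (0:ℂ) R, ‖f x‖ ≤ M) (hr : 0 < r) (hrR : r < R) :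
    ‖deriv f 0‖ ≤ 2 * M / r := by
  have hR : ball (0:ℂ) R ∈ nhds (0:ℂ) := ball_mem_nhds _ (hr.trans hrR)
  have hg1 : DifferentiableOn ℂ (dslope f 0) (ball 0 R) :=
    (Complex.differentiableOn_dslope hR).mpr hf
  have hcl : DiffContOnCl ℂ (dslope f 0) (ball 0 r) := DifferentiableOn.diffContOnCl <| by
    rw [closure_ball _ hr.ne']
    exact hg1.mono (fun y hy => mem_ball_zero_iff.mpr
      (lt_of_le_of_lt (mem_closedBall_zero_iff.mp hy) hrR))
  have h := Complex.norm_le_of_forall_mem_frontier_norm_le (isBounded_ball) hcl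
    (C := 2 * M / r) ?_ (z := 0) ?_
  · rwa [dslope_same] at h
  · intro z hz
    rw [frontier_ball _ hr.ne', mem_sphere_zero_iff_norm] at hz
    have hz0 : z ≠ 0 := by intro h'; rw [h', norm_zero] at hz; exact hr.ne hz
    rw [dslope_of_ne _ hz0, slope_def_field, sub_zero, div_eq_mul_inv, norm_mul, norm_inv, hz]
    have h1 : ‖f z - f 0‖ ≤ 2 * M := by
      calc ‖f z - f 0‖ ≤ ‖f z‖ + ‖f 0‖ := norm_sub_le _ _
      _ ≤ M + M := add_le_add (hM z (by rw [mem_ball_zero_iff, hz]; exact hrR))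
          (hM 0 (mem_ball_self (hr.trans hrR)))
      _ = 2 * M := by ring
    rw [div_eq_mul_inv]
    exact mul_le_mul_of_nonneg_right h1 (by positivity)
  · rw [closure_ball _ hr.ne']; exact mem_closedBall_self hr.le

lemma dslope2_eq {f : ℂ → ℂ} (h0 : f 0 = 0) (h1 : deriv f 0 = 0) {x : ℂ} (hx : x ≠ 0) :
    dslope (dslope f 0) 0 x = f x / x ^ 2 := by
  rw [dslope_of_ne _ hx, slope_def_field, dslope_same, h1, sub_zero,
    dslope_of_ne _ hx, slope_def_field, h0, sub_zero]
  ring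

/-- For an analytic `f` with `f 0 = 0`, `f' 0 = 0`, the limit of `f x / x²` is
`(1/2) f''(0)`. -/
lemma tendsto_div_sq {f : ℂ → ℂ} (hf : AnalyticAt ℂ f 0) (h0 : f 0 = 0) (h1 : deriv f 0 = 0) :
    Tendsto (fun x => f x / x ^ 2) (𝓝[≠] (0:ℂ))
      (𝓝 ((1/2 : ℂ) * iteratedDeriv 2 f 0)) := by
  obtain ⟨p, hp⟩ := hf
  -- the coefficient identity
  have hco : (1/2 : ℂ) * iteratedDeriv 2 f 0 = p.coeff 2 := by
    obtain ⟨r, hball⟩ := hp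
    have h := hball.factorial_smul (1:ℂ) 2
    rw [iteratedDeriv_eq_iteratedFDeriv]
    have h2 : iteratedFDeriv ℂ 2 f 0 (fun _ => (1:ℂ)) = (Nat.factorial 2) • p 2 fun _ => (1:ℂ) :=
      h.symm
    rw [h2]
    show (1/2 : ℂ) * ((Nat.factorial 2) • p.coeff 2) = p.coeff 2
    rw [nsmul_eq_mul]
    norm_num [Nat.factorial]
    ring
  rw [hco]
  have hg2 : HasFPowerSeriesAt (dslope (dslope f 0) 0) p.fslope.fslope 0 :=
    (hp.has_fpower_series_dslope_fslope).has_fpower_series_dslope_fslope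
  have hval : dslope (dslope f 0) 0 0 = p.coeff 2 := by
    rw [dslope_same]
    have h4 := (hp.has_fpower_series_dslope_fslope).deriv
    exact h4.trans FormalMultilinearSeries.coeff_fslope
  have hcont : Tendsto (dslope (dslope f 0) 0) (𝓝[≠] (0:ℂ)) (𝓝 (p.coeff 2)) := by
    rw [← hval]
    exact (hg2.continuousAt.tendsto).mono_left nhdsWithin_le_nhds
  refine hcont.congr' ?_
  filter_upwards [self_mem_nhdsWithin] with x hx
  exact dslope2_eq h0 h1 hx


lemma isOpen_B2 : IsOpen B2 :=
  isOpen_lt (by fun_prop : Continuous fun z : ℂ × ℂ => ‖z.1‖ ^ 2 + ‖z.2‖ ^ 2) continuous_const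

lemma zero_mem_B2 : (0 : ℂ × ℂ) ∈ B2 := by
  show ‖(0:ℂ)‖^2 + ‖(0:ℂ)‖^2 < 1; norm_num

section Main

variable {H : ℂ × ℂ → ℂ × ℂ} (hd : DifferentiableOn ℂ H B2) (h0 : H 0 = 0)
  (hD : ∀ z : ℂ × ℂ, fderiv ℂ H 0 z = -z) {c : ℂ} {t : ℝ} (ht : 0 < t)
  (hct : ‖c‖ ^ 2 + t ^ 2 ≤ 1)

include hd

lemma hHat : ∀ z ∈ B2, DifferentiableAt ℂ H z := fun z hz =>
  hd.differentiableAt (isOpen_B2.mem_nhds hz)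

lemma sliceDeriv {γ : ℂ → ℂ × ℂ} {v : ℂ × ℂ} (hγ : HasDerivAt γ v 0) (hγ0 : γ 0 = 0) :
    HasDerivAt (fun ζ => H (γ ζ)) (fderiv ℂ H 0 v) 0 := by
  have hH : HasFDerivAt H (fderiv ℂ H 0) (γ 0) := by
    rw [hγ0]; exact (hHat hd 0 zero_mem_B2).hasFDerivAt
  exact hH.comp_hasDerivAt 0 hγ

omit hd in
lemma dummy' : True := trivial

include ht hct

omit hd in
lemma curve_mem {ζ : ℂ} (hζ : ζ ∈ ball (0:ℂ) 1) : (c * ζ ^ 2, (t:ℂ) * ζ) ∈ B2 := by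
  rw [mem_ball_zero_iff] at hζ
  show ‖c * ζ ^ 2‖ ^ 2 + ‖(t:ℂ) * ζ‖ ^ 2 < 1
  rw [norm_mul, norm_mul, norm_pow, Complex.norm_real, Real.norm_eq_abs, abs_of_pos ht]
  have h1 : (0:ℝ) ≤ ‖ζ‖ := norm_nonneg _
  have h2 : (0:ℝ) ≤ ‖c‖ := norm_nonneg _
  have h3 : ‖ζ‖ ^ 2 < 1 := by nlinarith
  have h4 : ‖ζ‖ ^ 4 ≤ ‖ζ‖ ^ 2 := by nlinarith
  nlinarith [sq_nonneg t, mul_nonneg (mul_nonneg h2 h2) (sq_nonneg ‖ζ‖)]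

lemma F_diff : DifferentiableOn ℂ (fun ζ => H (c * ζ ^ 2, (t:ℂ) * ζ)) (ball (0:ℂ) 1) := by
  intro ζ hζ
  have hγ : DifferentiableWithinAt ℂ (fun ζ : ℂ => (c * ζ ^ 2, (t:ℂ) * ζ)) (ball (0:ℂ) 1) ζ := by
    fun_prop
  exact ((hHat hd _ (curve_mem ht hct hζ)).comp_differentiableWithinAt ζ hγ)

include hD in
lemma F_deriv0 : HasDerivAt (fun ζ => H (c * ζ ^ 2, (t:ℂ) * ζ)) (0, -(t:ℂ)) 0 := by
  have h1 : HasDerivAt (fun ζ : ℂ => c * ζ ^ 2) 0 0 := by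
    simpa using ((hasDerivAt_pow 2 (0:ℂ)).const_mul c)
  have h2 : HasDerivAt (fun ζ : ℂ => (t:ℂ) * ζ) (t:ℂ) 0 := by
    simpa using (hasDerivAt_id (0:ℂ)).const_mul (t:ℂ)
  have hγ : HasDerivAt (fun ζ : ℂ => (c * ζ ^ 2, (t:ℂ) * ζ)) (0, (t:ℂ)) 0 := h1.prodMk h2
  have hγ0 : (fun ζ : ℂ => (c * ζ ^ 2, (t:ℂ) * ζ)) 0 = 0 := by simp
  have := sliceDeriv hd hγ hγ0
  rw [hD] at this
  simpa [Prod.neg_mk] using this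

include h0 hD in
omit ht hct in
lemma d_zero : deriv (fun y : ℂ => (H (y, (0:ℂ))).1) 0 = -1 := by
  have hγ : HasDerivAt (fun y : ℂ => (y, (0 : ℂ))) (1, 0) 0 :=
    (hasDerivAt_id 0).prodMk (hasDerivAt_const 0 (0:ℂ))
  have h := sliceDeriv hd hγ rfl
  have h1 := (ContinuousLinearMap.fst ℂ ℂ ℂ).hasFDerivAt.comp_hasDerivAt 0 h
  rw [hD] at h1
  have h2 : HasDerivAt (fun y : ℂ => (H (y, (0:ℂ))).1) (-1) 0 := by
    simpa [Function.comp_def] using h1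
  exact h2.deriv

omit ht hct in
lemma slice_fst_diff {w : ℂ} (hw : ‖w‖ ≤ 1/2) :
    DifferentiableOn ℂ (fun y : ℂ => (H (y, w)).1) (ball (0:ℂ) (3/5)) := by
  intro y hy
  rw [mem_ball_zero_iff] at hy
  have hm : (y, w) ∈ B2 := by
    show ‖y‖ ^ 2 + ‖w‖ ^ 2 < 1
    nlinarith [norm_nonneg y, norm_nonneg w]
  exact ((hHat hd _ hm).comp_differentiableWithinAt y (by fun_prop)).fst

include h0 hD in
omit ht hct in
lemma exists_unif_bound : ∃ C : ℝ, 0 ≤ C ∧ ∀ w x : ℂ, ‖w‖ ≤ 1/2 → ‖x‖ ≤ 1/2 →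
    ‖(H (x, w)).1 - (H (0, w)).1 - x * deriv (fun y => (H (y, w)).1) 0‖ ≤ C * ‖x‖ ^ 2 := by
  have hsub : closedBall (0:ℂ) (3/5) ×ˢ closedBall (0:ℂ) (1/2) ⊆ B2 := by
    rintro ⟨a, b⟩ ⟨ha, hb⟩
    rw [mem_closedBall_zero_iff] at ha hb
    show ‖a‖ ^ 2 + ‖b‖ ^ 2 < 1
    nlinarith [norm_nonneg a, norm_nonneg b]
  have hcompact : IsCompact (closedBall (0:ℂ) (3/5) ×ˢ closedBall (0:ℂ) (1/2)) :=
    (isCompact_closedBall _ _).prod (isCompact_closedBall _ _)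
  have hcont : ContinuousOn (fun z : ℂ × ℂ => (H z).1)
      (closedBall (0:ℂ) (3/5) ×ˢ closedBall (0:ℂ) (1/2)) :=
    (hd.continuousOn.mono hsub).fst
  obtain ⟨M, hM⟩ := hcompact.exists_bound_of_continuousOn hcont
  have hM0 : 0 ≤ M := le_trans (norm_nonneg _) (hM (0,0)
    (by constructor <;> simp <;> norm_num))
  refine ⟨20 * M, by positivity, fun w x hw hx => ?_⟩
  set fw := fun y : ℂ => (H (y, w)).1 with hfwdef
  have hfw : DifferentiableOn ℂ fw (ball (0:ℂ) (3/5)) := slice_fst_diff hd hw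
  have hMw : ∀ y ∈ ball (0:ℂ) (3/5), ‖fw y‖ ≤ M := by
    intro y hy
    rw [mem_ball_zero_iff] at hy
    exact hM (y, w) ⟨mem_closedBall_zero_iff.mpr hy.le, mem_closedBall_zero_iff.mpr hw⟩
  have hdw : ‖deriv fw 0‖ ≤ 4 * M := by
    have := deriv_center_bound hfw hMw (by norm_num : (0:ℝ) < 1/2) (by norm_num)
    calc ‖deriv fw 0‖ ≤ 2 * M / (1/2) := this
    _ = 4 * M := by ring
  set k := fun y : ℂ => fw y - fw 0 - y * deriv fw 0 with hkdef
  have hk : DifferentiableOn ℂ k (ball (0:ℂ) (3/5)) :=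
    (hfw.sub_const _).sub ((differentiable_id.mul_const _).differentiableOn)
  have hk0 : k 0 = 0 := by simp [hkdef]
  have hkd : deriv k 0 = 0 := by
    have h1 : HasDerivAt fw (deriv fw 0) 0 :=
      (hfw.differentiableAt (ball_mem_nhds _ (by norm_num))).hasDerivAt
    have h2 : HasDerivAt k (deriv fw 0 - 1 * deriv fw 0) 0 :=
      (h1.sub_const _).sub ((hasDerivAt_id 0).mul_const _)
    have h3 : HasDerivAt k 0 0 := by simpa using h2
    exact h3.deriv
  have hkb : ∀ y ∈ ball (0:ℂ) (3/5), ‖k y‖ ≤ 5 * M := by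
    intro y hy
    have h5 : ‖y‖ ≤ 3/5 := (mem_ball_zero_iff.mp hy).le
    calc ‖k y‖ ≤ ‖fw y - fw 0‖ + ‖y * deriv fw 0‖ := norm_sub_le _ _
    _ ≤ (‖fw y‖ + ‖fw 0‖) + ‖y‖ * ‖deriv fw 0‖ := by
        rw [norm_mul]; exact add_le_add (norm_sub_le _ _) le_rfl
    _ ≤ (M + M) + (3/5) * (4 * M) := by
        refine add_le_add (add_le_add (hMw y hy) (hMw 0 (by simp))) ?_
        exact mul_le_mul h5 hdw (norm_nonneg _) (by norm_num)
    _ ≤ 5 * M := by linarith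
  have := schwarz2 hk hk0 hkd hkb (by norm_num : (0:ℝ) < 1/2) (by norm_num) x hx
  calc ‖(H (x, w)).1 - (H (0, w)).1 - x * deriv (fun y => (H (y, w)).1) 0‖
      = ‖k x‖ := rfl
  _ ≤ 5 * M / (1/2)^2 * ‖x‖^2 := this
  _ = 20 * M * ‖x‖^2 := by ring

include h0 hD in
omit ht hct in
lemma d_tendsto : Tendsto (fun w : ℂ => deriv (fun y => (H (y, w)).1) 0) (𝓝 0) (𝓝 (-1)) := by
  obtain ⟨C, hC0, hU⟩ := exists_unif_bound hd h0 hD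
  rw [Metric.tendsto_nhds]
  intro ε hε
  set δx : ℝ := min (1/2) (ε/(3*(C+1))) with hδdef
  have hδpos : 0 < δx := lt_min (by norm_num) (by positivity)
  set x₀ : ℂ := (δx : ℂ) with hx₀def
  have hx₀norm : ‖x₀‖ = δx := by
    rw [hx₀def, Complex.norm_real, Real.norm_eq_abs, abs_of_pos hδpos]
  have hx₀ne : x₀ ≠ 0 := by
    rw [hx₀def]; exact_mod_cast hδpos.ne'
  have hx₀le : ‖x₀‖ ≤ 1/2 := by rw [hx₀norm]; exact min_le_left _ _
  set d := fun w : ℂ => deriv (fun y => (H (y, w)).1) 0 with hddef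
  set G := fun w : ℂ => ((H (x₀, w)).1 - (H (0, w)).1) / x₀ with hGdef
  have hGd : ∀ w : ℂ, ‖w‖ ≤ 1/2 → ‖d w - G w‖ ≤ C * δx := by
    intro w hw
    have h1 := hU w x₀ hw hx₀le
    have h2 : d w - G w = -((H (x₀, w)).1 - (H (0, w)).1 - x₀ * d w) / x₀ := by
      simp only [hGdef]
      field_simp
      ring
    rw [h2, norm_div, norm_neg, hx₀norm]
    rw [hx₀norm] at h1
    calc ‖(H (x₀, w)).1 - (H (0, w)).1 - x₀ * d w‖ / δx ≤ C * δx ^ 2 / δx := by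
          gcongr
    _ = C * δx := by field_simp
  have hCδ : C * δx ≤ ε / 3 := by
    have h1 : δx ≤ ε / (3*(C+1)) := min_le_right _ _
    have h2 : C * δx ≤ C * (ε / (3*(C+1))) := mul_le_mul_of_nonneg_left h1 hC0
    calc C * δx ≤ C * (ε / (3*(C+1))) := h2
    _ = (C * ε) / (3*(C+1)) := by ring
    _ ≤ ε / 3 := by
        rw [div_le_div_iff₀ (by positivity) (by norm_num)]
        nlinarith [hε.le]
  have hmem : (x₀, (0:ℂ)) ∈ B2 := by
    show ‖x₀‖ ^ 2 + ‖(0:ℂ)‖ ^ 2 < 1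
    rw [hx₀norm]
    simp only [norm_zero]
    nlinarith [min_le_left (1/2 : ℝ) (ε/(3*(C+1))), hδpos]
  have hGcont : ContinuousAt G 0 := by
    have h1 : ContinuousAt (fun w : ℂ => (H (x₀, w)).1) 0 := by
      have := (hHat hd _ hmem).continuousAt
      exact (this.comp (by fun_prop : ContinuousAt (fun w : ℂ => (x₀, w)) 0)).fst
    have h2 : ContinuousAt (fun w : ℂ => (H (0, w)).1) 0 := by
      have h0' : ContinuousAt H ((0:ℂ), (0:ℂ)) := (hHat hd 0 zero_mem_B2).continuousAt
      exact (h0'.comp (by fun_prop : ContinuousAt (fun w : ℂ => ((0:ℂ), w)) 0)).fst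
    exact (h1.sub h2).div_const _
  have hev1 := Metric.tendsto_nhds.mp hGcont.tendsto (ε/3) (by positivity)
  have hev2 : ∀ᶠ w in 𝓝 (0:ℂ), ‖w‖ ≤ 1/2 := by
    filter_upwards [Metric.closedBall_mem_nhds (0:ℂ) (by norm_num : (0:ℝ) < 1/2)] with w hw
    exact mem_closedBall_zero_iff.mp hw
  filter_upwards [hev1, hev2] with w h1 h2
  have hG0 : ‖G 0 - d 0‖ ≤ C * δx := by
    rw [norm_sub_rev]
    exact hGd 0 (by norm_num)
  rw [dist_eq_norm] at h1 ⊢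
  have key : ‖d w - -1‖ ≤ ‖d w - G w‖ + ‖G w - G 0‖ + ‖G 0 - d 0‖ := by
    have hd0 : d 0 = -1 := d_zero hd h0 hD
    rw [← hd0]
    calc ‖d w - d 0‖ = ‖(d w - G w) + (G w - G 0) + (G 0 - d 0)‖ := by ring_nf
    _ ≤ ‖(d w - G w) + (G w - G 0)‖ + ‖G 0 - d 0‖ := norm_add_le _ _
    _ ≤ ‖d w - G w‖ + ‖G w - G 0‖ + ‖G 0 - d 0‖ :=
        add_le_add_left (norm_add_le _ _) _
  have h4 := hGd w h2
  have h5 : ε/3 + ε/3 + ε/3 = ε := by ring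
  linarith [key, h1, hCδ, hG0]
include h0 hD in
omit ht hct in
lemma slice1_deriv' :
    HasDerivAt (fun ζ : ℂ => (H (0, ζ)).1) 0 0 := by
  have hγ : HasDerivAt (fun ζ : ℂ => ((0 : ℂ), ζ)) (0, 1) 0 :=
    (hasDerivAt_const 0 (0:ℂ)).prodMk (hasDerivAt_id 0)
  have h := (sliceDeriv hd hγ rfl)
  have h1 := (ContinuousLinearMap.fst ℂ ℂ ℂ).hasFDerivAt.comp_hasDerivAt 0 h
  simpa [hD, Function.comp_def] using h1

omit ht hct in
lemma φ_diff : DifferentiableOn ℂ (fun w : ℂ => (H (0, w)).1) (ball (0:ℂ) 1) := by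
  intro w hw
  rw [mem_ball_zero_iff] at hw
  have hm : ((0:ℂ), w) ∈ B2 := by
    show ‖(0:ℂ)‖ ^ 2 + ‖w‖ ^ 2 < 1
    simp only [norm_zero]
    nlinarith [norm_nonneg w]
  exact ((hHat hd _ hm).comp_differentiableWithinAt w (by fun_prop)).fst

include h0 hD in
omit ht hct in
lemma φ_tendsto :
    Tendsto (fun w : ℂ => (H (0, w)).1 / w ^ 2) (𝓝[≠] (0:ℂ))
      (𝓝 ((1/2 : ℂ) * iteratedDeriv 2 (fun w : ℂ => (H (0, w)).1) 0)) := by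
  have han : AnalyticAt ℂ (fun w : ℂ => (H (0, w)).1) 0 :=
    (φ_diff hd).analyticAt (ball_mem_nhds _ one_pos)
  have hφ0 : (H ((0:ℂ), (0:ℂ))).1 = 0 := by
    have : ((0:ℂ), (0:ℂ)) = (0 : ℂ × ℂ) := rfl
    rw [this, h0]
    rfl
  exact tendsto_div_sq han hφ0 (slice1_deriv' hd h0 hD).deriv

include h0 hD ht hct in
lemma main_limit :
    Tendsto (fun ζ : ℂ => (H (c * ζ ^ 2, (t:ℂ) * ζ)).1 / ζ ^ 2) (𝓝[≠] (0:ℂ))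
      (𝓝 ((1/2 : ℂ) * iteratedDeriv 2 (fun w : ℂ => (H (0, w)).1) 0 * (t:ℂ)^2 - c)) := by
  have htne : (t:ℂ) ≠ 0 := by exact_mod_cast ht.ne'
  set q := (1/2 : ℂ) * iteratedDeriv 2 (fun w : ℂ => (H (0, w)).1) 0 with hqdef
  -- multiplication map preserves the punctured neighborhood filter
  have hmul : Tendsto (fun ζ : ℂ => (t:ℂ) * ζ) (𝓝[≠] (0:ℂ)) (𝓝[≠] (0:ℂ)) := by
    apply tendsto_nhdsWithin_of_tendsto_nhds_of_eventually_within
    · have : Tendsto (fun ζ : ℂ => (t:ℂ) * ζ) (𝓝 0) (𝓝 ((t:ℂ) * 0)) :=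
        (continuous_const.mul continuous_id).tendsto 0
      simpa using this.mono_left nhdsWithin_le_nhds
    · filter_upwards [self_mem_nhdsWithin] with ζ hζ
      exact mul_ne_zero htne hζ
  -- T1
  have T1 : Tendsto (fun ζ : ℂ => (H (0, (t:ℂ) * ζ)).1 / ζ ^ 2) (𝓝[≠] (0:ℂ))
      (𝓝 (q * (t:ℂ)^2)) := by
    have hcomp := (φ_tendsto hd h0 hD).comp hmul
    have hconst := hcomp.const_mul ((t:ℂ)^2)
    rw [mul_comm] at hconst
    refine hconst.congr' ?_
    filter_upwards [self_mem_nhdsWithin] with ζ hζ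
    have hζ' : (ζ:ℂ) ≠ 0 := hζ
    simp only [Function.comp_apply]
    field_simp [htne, hζ']
  -- T2
  set d := fun w : ℂ => deriv (fun y : ℂ => (H (y, w)).1) 0 with hddef
  have T2 : Tendsto (fun ζ : ℂ =>
      ((H (c * ζ ^ 2, (t:ℂ) * ζ)).1 - (H (0, (t:ℂ) * ζ)).1 + c * ζ ^ 2) / ζ ^ 2)
      (𝓝[≠] (0:ℂ)) (𝓝 0) := by
    obtain ⟨C, hC0, hU⟩ := exists_unif_bound hd h0 hD
    -- the bounding function
    set bnd := fun ζ : ℂ => C * ‖c‖^2 * ‖ζ‖^2 + ‖c‖ * ‖d ((t:ℂ) * ζ) + 1‖ with hbnddef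
    have hbnd0 : Tendsto bnd (𝓝[≠] (0:ℂ)) (𝓝 0) := by
      have hb1 : Tendsto (fun ζ : ℂ => C * ‖c‖^2 * ‖ζ‖^2) (𝓝 (0:ℂ)) (𝓝 0) := by
        have : Continuous (fun ζ : ℂ => C * ‖c‖^2 * ‖ζ‖^2) := by fun_prop
        simpa using this.tendsto 0
      have hb2 : Tendsto (fun ζ : ℂ => ‖c‖ * ‖d ((t:ℂ) * ζ) + 1‖) (𝓝 (0:ℂ)) (𝓝 0) := by
        have ht0 : Tendsto (fun ζ : ℂ => (t:ℂ) * ζ) (𝓝 0) (𝓝 0) := by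
          have : Tendsto (fun ζ : ℂ => (t:ℂ) * ζ) (𝓝 0) (𝓝 ((t:ℂ) * 0)) :=
            (continuous_const.mul continuous_id).tendsto 0
          simpa using this
        have hdt : Tendsto (fun ζ : ℂ => d ((t:ℂ) * ζ) + 1) (𝓝 0) (𝓝 0) := by
          have := (d_tendsto hd h0 hD).comp ht0
          have h2 := this.add_const (1:ℂ)
          simpa using h2
        have := hdt.norm
        rw [norm_zero] at this
        simpa using this.const_mul ‖c‖
      have := hb1.add hb2
      rw [add_zero] at this
      exact this.mono_left nhdsWithin_le_nhds
    apply squeeze_zero_norm' _ hbnd0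
    -- eventual bound
    have hev : ∀ᶠ ζ in 𝓝[≠] (0:ℂ), ‖ζ‖ ≤ (2*(t + ‖c‖ + 1))⁻¹ := by
      apply eventually_nhdsWithin_of_eventually_nhds
      filter_upwards [Metric.closedBall_mem_nhds (0:ℂ) (by positivity : (0:ℝ) < (2*(t + ‖c‖ + 1))⁻¹)] with ζ hζ
      exact mem_closedBall_zero_iff.mp hζ
    filter_upwards [hev, self_mem_nhdsWithin] with ζ hζ hζ0
    have hζ0' : ζ ≠ 0 := hζ0
    have hr0 : (0:ℝ) < 2*(t + ‖c‖ + 1) := by positivity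
    have hrle : (2*(t + ‖c‖ + 1))⁻¹ ≤ 1 := by
      rw [inv_le_one_iff₀]
      right
      nlinarith [norm_nonneg c]
    have hζ1 : ‖ζ‖ ≤ 1 := le_trans hζ hrle
    have hw : ‖(t:ℂ) * ζ‖ ≤ 1/2 := by
      rw [norm_mul, Complex.norm_real, Real.norm_eq_abs, abs_of_pos ht]
      calc t * ‖ζ‖ ≤ t * (2*(t + ‖c‖ + 1))⁻¹ := by
            exact mul_le_mul_of_nonneg_left hζ ht.le
      _ ≤ 1/2 := by
          rw [mul_inv_le_iff₀ hr0]
          nlinarith [norm_nonneg c]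
    have hx : ‖c * ζ ^ 2‖ ≤ 1/2 := by
      rw [norm_mul, norm_pow]
      calc ‖c‖ * ‖ζ‖^2 ≤ ‖c‖ * ‖ζ‖ := by
            have h9 : ‖ζ‖^2 ≤ ‖ζ‖ := by nlinarith [norm_nonneg ζ]
            exact mul_le_mul_of_nonneg_left h9 (norm_nonneg c)
      _ ≤ ‖c‖ * (2*(t + ‖c‖ + 1))⁻¹ := mul_le_mul_of_nonneg_left hζ (norm_nonneg c)
      _ ≤ 1/2 := by
          rw [mul_inv_le_iff₀ hr0]
          nlinarith [norm_nonneg c]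
    have hUa := hU ((t:ℂ)*ζ) (c * ζ^2) hw hx
    -- rewrite numerator
    have hsplit : (H (c * ζ ^ 2, (t:ℂ) * ζ)).1 - (H (0, (t:ℂ) * ζ)).1 + c * ζ ^ 2
        = ((H (c * ζ ^ 2, (t:ℂ) * ζ)).1 - (H (0, (t:ℂ) * ζ)).1 - (c*ζ^2) * d ((t:ℂ)*ζ))
          + (c*ζ^2) * (d ((t:ℂ)*ζ) + 1) := by ring
    have hnz : ‖ζ‖ ≠ 0 := norm_ne_zero_iff.mpr hζ0'
    rw [norm_div, hsplit]
    have h1 : ‖((H (c * ζ ^ 2, (t:ℂ) * ζ)).1 - (H (0, (t:ℂ) * ζ)).1 - (c*ζ^2) * d ((t:ℂ)*ζ))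
          + (c*ζ^2) * (d ((t:ℂ)*ζ) + 1)‖
        ≤ C * ‖c * ζ^2‖^2 + ‖c * ζ^2‖ * ‖d ((t:ℂ)*ζ) + 1‖ := by
      calc _ ≤ ‖(H (c * ζ ^ 2, (t:ℂ) * ζ)).1 - (H (0, (t:ℂ) * ζ)).1 - (c*ζ^2) * d ((t:ℂ)*ζ)‖
          + ‖(c*ζ^2) * (d ((t:ℂ)*ζ) + 1)‖ := norm_add_le _ _
      _ ≤ C * ‖c * ζ^2‖^2 + ‖c * ζ^2‖ * ‖d ((t:ℂ)*ζ) + 1‖ := by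
          rw [norm_mul]
          exact add_le_add hUa le_rfl
    rw [norm_pow]
    rw [div_le_iff₀ (by positivity : (0:ℝ) < ‖ζ‖^2)]
    calc ‖_ + _‖ ≤ C * ‖c * ζ^2‖^2 + ‖c * ζ^2‖ * ‖d ((t:ℂ)*ζ) + 1‖ := h1
    _ ≤ bnd ζ * ‖ζ‖^2 := by
        rw [hbnddef]
        simp only [norm_mul, norm_pow]
        have e1 : C * (‖c‖ * ‖ζ‖^2)^2 ≤ C * ‖c‖^2 * ‖ζ‖^2 * ‖ζ‖^2 := le_of_eq (by ring)
        have e2 : ‖c‖ * ‖ζ‖^2 * ‖d ((t:ℂ)*ζ) + 1‖ = (‖c‖ * ‖d ((t:ℂ)*ζ) + 1‖) * ‖ζ‖^2 := by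
          ring
        rw [e2]
        ring_nf
        nlinarith [e1, norm_nonneg (d ((t:ℂ)*ζ) + 1), norm_nonneg c, sq_nonneg ‖ζ‖]
  -- combine
  have hsum := (T2.add T1)
  rw [zero_add] at hsum
  have hfinal := hsum.sub_const c
  refine hfinal.congr' ?_
  filter_upwards [self_mem_nhdsWithin] with ζ hζ
  have hζ' : (ζ:ℂ) ≠ 0 := hζ
  show ((H (c * ζ ^ 2, (t:ℂ) * ζ)).1 - (H (0, (t:ℂ) * ζ)).1 + c * ζ ^ 2) / ζ ^ 2
      + (H (0, (t:ℂ) * ζ)).1 / ζ ^ 2 - c = (H (c * ζ ^ 2, (t:ℂ) * ζ)).1 / ζ ^ 2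
  field_simp
  ring
include h0 hD ht hct in
lemma key_ineq (hRe : ∀ z ∈ B2,
      ((H z).1 * (starRingEnd ℂ) z.1 + (H z).2 * (starRingEnd ℂ) z.2).re ≤ 0) :
    ((starRingEnd ℂ) c *
      ((1/2 : ℂ) * iteratedDeriv 2 (fun w : ℂ => (H (0, w)).1) 0 * (t:ℂ)^2 - c)).re
      ≤ t ^ 2 := by
  set q := (1/2 : ℂ) * iteratedDeriv 2 (fun w : ℂ => (H (0, w)).1) 0 with hqdef
  set F₁ := fun ζ : ℂ => (starRingEnd ℂ) c * (H (c * ζ ^ 2, (t:ℂ) * ζ)).1 with hF₁def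
  set F₂ := fun ζ : ℂ => (t:ℂ) * (H (c * ζ ^ 2, (t:ℂ) * ζ)).2 with hF₂def
  have hball : ball (0:ℂ) 1 ∈ 𝓝 (0:ℂ) := ball_mem_nhds _ one_pos
  have h0mem : (0:ℂ) ∈ ball (0:ℂ) 1 := mem_ball_self one_pos
  -- differentiability
  have hHγ : DifferentiableOn ℂ (fun ζ => H (c * ζ ^ 2, (t:ℂ) * ζ)) (ball (0:ℂ) 1) :=
    F_diff hd ht hct
  have hF₁d : DifferentiableOn ℂ F₁ (ball (0:ℂ) 1) := (hHγ.fst).const_mul _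
  have hF₂d : DifferentiableOn ℂ F₂ (ball (0:ℂ) 1) := (hHγ.snd).const_mul _
  -- derivatives at 0
  have hder := F_deriv0 hd hD ht hct
  have hd1 : HasDerivAt (fun ζ => (H (c * ζ ^ 2, (t:ℂ) * ζ)).1) 0 0 := by
    have h1 := (ContinuousLinearMap.fst ℂ ℂ ℂ).hasFDerivAt.comp_hasDerivAt 0 hder
    simpa [Function.comp_def] using h1
  have hd2 : HasDerivAt (fun ζ => (H (c * ζ ^ 2, (t:ℂ) * ζ)).2) (-(t:ℂ)) 0 := by
    have h1 := (ContinuousLinearMap.snd ℂ ℂ ℂ).hasFDerivAt.comp_hasDerivAt 0 hder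
    simpa [Function.comp_def] using h1
  have hcurve0 : (c * (0:ℂ) ^ 2, (t:ℂ) * (0:ℂ)) = (0 : ℂ × ℂ) := by simp
  have hF₁0 : F₁ 0 = 0 := by
    rw [hF₁def]; show (starRingEnd ℂ) c * (H (c * 0 ^ 2, (t:ℂ) * 0)).1 = 0
    rw [hcurve0, h0]; simp
  have hF₂0 : F₂ 0 = 0 := by
    rw [hF₂def]; show (t:ℂ) * (H (c * 0 ^ 2, (t:ℂ) * 0)).2 = 0
    rw [hcurve0, h0]; simp
  have hF₁d0 : deriv F₁ 0 = 0 := by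
    have h2 : HasDerivAt F₁ ((starRingEnd ℂ) c * 0) 0 := hd1.const_mul _
    simpa using h2.deriv
  have hF₂d0 : deriv F₂ 0 = (t:ℂ) * (-(t:ℂ)) := (hd2.const_mul _).deriv
  -- A and B
  set A := dslope (dslope F₁ 0) 0 with hAdef
  set B := dslope F₂ 0 with hBdef
  have hAd : DifferentiableOn ℂ A (ball (0:ℂ) 1) :=
    (Complex.differentiableOn_dslope hball).mpr ((Complex.differentiableOn_dslope hball).mpr hF₁d)
  have hBd : DifferentiableOn ℂ B (ball (0:ℂ) 1) :=
    (Complex.differentiableOn_dslope hball).mpr hF₂d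
  have hAr : ∀ ζ : ℂ, ζ ≠ 0 → A ζ = F₁ ζ / ζ ^ 2 := fun ζ hζ => dslope2_eq hF₁0 hF₁d0 hζ
  have hBr : ∀ ζ : ℂ, ζ ≠ 0 → B ζ = F₂ ζ / ζ := by
    intro ζ hζ
    rw [hBdef, dslope_of_ne _ hζ, slope_def_field, hF₂0, sub_zero, sub_zero]
  have hB0 : B 0 = -((t:ℂ))^2 := by
    rw [hBdef, dslope_same, hF₂d0]; ring
  -- value of A at 0 via the limit
  have hA0 : A 0 = (starRingEnd ℂ) c * (q * (t:ℂ)^2 - c) := by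
    have hAc : ContinuousAt A 0 := (hAd.differentiableAt hball).continuousAt
    have hA1 : Tendsto A (𝓝[≠] (0:ℂ)) (𝓝 (A 0)) := hAc.tendsto.mono_left nhdsWithin_le_nhds
    have hA2 : Tendsto A (𝓝[≠] (0:ℂ)) (𝓝 ((starRingEnd ℂ) c * (q * (t:ℂ)^2 - c))) := by
      have hm := (main_limit hd h0 hD ht hct).const_mul ((starRingEnd ℂ) c)
      refine hm.congr' ?_
      filter_upwards [self_mem_nhdsWithin] with ζ hζ
      have hζ' : (ζ:ℂ) ≠ 0 := hζ
      rw [hAr ζ hζ', hF₁def]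
      ring
    exact tendsto_nhds_unique hA1 hA2
  -- maximum principle for each r < 1
  have hmain : ∀ r : ℝ, 0 < r → r < 1 →
      r^2 * ((starRingEnd ℂ) c * (q * (t:ℂ)^2 - c)).re - t^2 ≤ 0 := by
    intro r hr hr1
    set g := fun ζ : ℂ => ((r:ℂ))^2 * A ζ + B ζ with hgdef
    have hgd : DifferentiableOn ℂ g (ball (0:ℂ) 1) := (hAd.const_mul _).add hBd
    have hgcl : DiffContOnCl ℂ g (ball 0 r) := DifferentiableOn.diffContOnCl <| by
      rw [closure_ball _ hr.ne']
      exact hgd.mono (fun y hy => mem_ball_zero_iff.mpr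
        (lt_of_le_of_lt (mem_closedBall_zero_iff.mp hy) hr1))
    have hbound : ∀ ζ ∈ sphere (0:ℂ) r, (g ζ).re ≤ 0 := by
      intro ζ hζs
      rw [mem_sphere_zero_iff_norm] at hζs
      have hζ0 : ζ ≠ 0 := by
        intro h'; rw [h', norm_zero] at hζs; exact hr.ne hζs
      have hζb : ζ ∈ ball (0:ℂ) 1 := by rw [mem_ball_zero_iff, hζs]; exact hr1
      have hzB2 : (c * ζ ^ 2, (t:ℂ) * ζ) ∈ B2 := curve_mem ht hct hζb
      have hre := hRe _ hzB2
      have hconj : (starRingEnd ℂ) ζ * ζ = ((r:ℂ))^2 := by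
        rw [mul_comm, Complex.mul_conj, Complex.normSq_eq_norm_sq]
        have habs : ‖ζ‖ = r := hζs
        rw [habs]
        push_cast
        ring
      have hz2 : (ζ:ℂ)^2 ≠ 0 := pow_ne_zero 2 hζ0
      have hident : ((H (c * ζ ^ 2, (t:ℂ) * ζ)).1 * (starRingEnd ℂ) (c * ζ ^ 2)
          + (H (c * ζ ^ 2, (t:ℂ) * ζ)).2 * (starRingEnd ℂ) ((t:ℂ) * ζ))
          = ((r:ℂ))^2 * g ζ := by
        have hmulid : ((H (c * ζ ^ 2, (t:ℂ) * ζ)).1 * (starRingEnd ℂ) (c * ζ ^ 2)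
          + (H (c * ζ ^ 2, (t:ℂ) * ζ)).2 * (starRingEnd ℂ) ((t:ℂ) * ζ)) * ζ ^ 2
            = (((r:ℂ))^2 * g ζ) * ζ ^ 2 := by
          simp only [hgdef]
          rw [hAr ζ hζ0, hBr ζ hζ0]
          have e3 : ((r:ℂ)^2 * ((r:ℂ)^2 * (F₁ ζ/ζ^2) + F₂ ζ/ζ)) * ζ^2
              = (r:ℂ)^2 * ((r:ℂ)^2 * F₁ ζ + F₂ ζ * ζ) := by
            field_simp
          rw [e3]
          simp only [hF₁def, hF₂def, map_mul, map_pow, Complex.conj_ofReal]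
          linear_combination (((starRingEnd ℂ) c * (H (c * ζ ^ 2, (t:ℂ) * ζ)).1) *
            ((starRingEnd ℂ) ζ * ζ + ((r:ℂ))^2)
            + ((t:ℂ) * (H (c * ζ ^ 2, (t:ℂ) * ζ)).2) * ζ) * hconj
        exact mul_right_cancel₀ hz2 hmulid
      rw [hident, ← Complex.ofReal_pow, Complex.re_ofReal_mul] at hre
      nlinarith [pow_pos hr 2]
    have hg0 : (g 0).re ≤ 0 := re_le_zero_center hr hgcl hbound
    have hg0eq : (g 0).re = r^2 * (A 0).re - t^2 := by
      rw [hgdef]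
      show (((r:ℂ))^2 * A 0 + B 0).re = _
      rw [hB0, Complex.add_re, ← Complex.ofReal_pow, Complex.re_ofReal_mul]
      have : (-((t:ℂ))^2).re = -(t^2 : ℝ) := by
        rw [← Complex.ofReal_pow, ← Complex.ofReal_neg, Complex.ofReal_re]
      rw [this]
      ring
    rw [hg0eq, hA0] at hg0
    exact hg0
  -- let r → 1
  set X := ((starRingEnd ℂ) c * (q * (t:ℂ)^2 - c)).re with hXdef
  have hT : Tendsto (fun r : ℝ => r^2 * X - t^2) (𝓝[<] (1:ℝ)) (𝓝 (1^2 * X - t^2)) :=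
    ((continuous_pow 2).mul continuous_const).sub continuous_const |>.tendsto 1
      |>.mono_left nhdsWithin_le_nhds
  have hev : ∀ᶠ r in 𝓝[<] (1:ℝ), r^2 * X - t^2 ≤ 0 := by
    filter_upwards [Ioo_mem_nhdsLT_of_mem (⟨zero_lt_one, le_rfl⟩ : (1:ℝ) ∈ Ioc 0 1)] with r hr
    exact hmain r hr.1 hr.2
  have := le_of_tendsto hT hev
  have hXle : X ≤ t^2 := by nlinarith [this]
  calc ((starRingEnd ℂ) c * (q * (t:ℂ)^2 - c)).re = X := rfl
  _ ≤ t^2 := hXle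
end Main

/-- For `H` in `M₋`, the coefficient satisfies `|q¹₀₂| ≤ 3√3/2`. -/
theorem shearCoef_bound (H : ℂ × ℂ → ℂ × ℂ) (hH : MminusClass H) :
    ‖shearCoef H‖ ≤ 3 * Real.sqrt 3 / 2 := by
  obtain ⟨hd, h0, hD, hRe⟩ := hH
  rcases eq_or_ne (shearCoef H) 0 with hq0 | hq0
  · rw [hq0, norm_zero]
    positivity
  set q := shearCoef H with hqdef
  set s3 := Real.sqrt 3 with hs3def
  have hs3 : 0 < s3 := Real.sqrt_pos.mpr (by norm_num)
  have hs3sq : s3 ^ 2 = 3 := Real.sq_sqrt (by norm_num)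
  set nq := ‖q‖ with hnqdef
  have hnq0 : 0 < nq := norm_pos_iff.mpr hq0
  set t := Real.sqrt (2/3) with htdef
  have ht : 0 < t := Real.sqrt_pos.mpr (by norm_num)
  have ht2 : t ^ 2 = 2/3 := Real.sq_sqrt (by norm_num)
  set c : ℂ := ((s3⁻¹ / nq : ℝ) : ℂ) * q with hcdef
  have hcnorm : ‖c‖ = s3⁻¹ := by
    rw [hcdef, norm_mul, Complex.norm_real, Real.norm_eq_abs,
      abs_of_pos (by positivity : (0:ℝ) < s3⁻¹ / nq)]
    rw [hnqdef]
    have habs : 0 < ‖q‖ := norm_pos_iff.mpr hq0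
    field_simp
  have hct : ‖c‖ ^ 2 + t ^ 2 ≤ 1 := by
    rw [hcnorm, ht2]
    have h1 : (s3⁻¹) ^ 2 = 1/3 := by
      rw [inv_pow, hs3sq]
      norm_num
    rw [h1]
    norm_num
  have hkey := key_ineq hd h0 hD ht hct hRe
  have hcc : (starRingEnd ℂ) q * q = ((nq ^ 2 : ℝ) : ℂ) := by
    rw [mul_comm, Complex.mul_conj, Complex.normSq_eq_norm_sq]
  have hX : (starRingEnd ℂ) c *
      ((1/2 : ℂ) * iteratedDeriv 2 (fun w : ℂ => (H (0, w)).1) 0 * (t:ℂ)^2 - c)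
      = (((s3⁻¹/nq) * t^2 * nq^2 - (s3⁻¹/nq)^2 * nq^2 : ℝ) : ℂ) := by
    have hqq : (1/2 : ℂ) * iteratedDeriv 2 (fun w : ℂ => (H (0, w)).1) 0 = q := rfl
    rw [hqq, hcdef, map_mul, Complex.conj_ofReal]
    have expand : ((s3⁻¹/nq : ℝ):ℂ) * (starRingEnd ℂ) q * (q * (t:ℂ)^2 - ((s3⁻¹/nq : ℝ):ℂ) * q)
        = ((s3⁻¹/nq : ℝ):ℂ) * (t:ℂ)^2 * ((starRingEnd ℂ) q * q)
          - ((s3⁻¹/nq : ℝ):ℂ)^2 * ((starRingEnd ℂ) q * q) := by ring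
    rw [expand, hcc]
    push_cast
    ring
  rw [hX, Complex.ofReal_re] at hkey
  -- now a real inequality
  rw [ht2] at hkey
  have hs3ne : s3 ≠ 0 := hs3.ne'
  have hnqne : nq ≠ 0 := hnq0.ne'
  have hfield : (s3⁻¹/nq) * (2/3) * nq^2 - (s3⁻¹/nq)^2 * nq^2
      = (2/3) * nq / s3 - 1/3 := by
    have h9 : s3 * s3 = 3 := by nlinarith [hs3sq]
    field_simp
    have h10 : s3 ^ 4 = 9 := by nlinarith [hs3sq]
    ring_nf
    have e : nq^3*s3^2*27 = nq^3*s3^4*9 := by rw [h10, hs3sq]; ring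
    linarith [e]
  rw [hfield] at hkey
  -- (2/3) nq / s3 - 1/3 ≤ 2/3  ⟹  nq ≤ 3 s3 / 2
  show nq ≤ 3 * s3 / 2
  rw [sub_le_iff_le_add, div_le_iff₀ hs3] at hkey
  linarith [hkey]
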